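/- Every Fσ subset X of the Cantor space can be written as a union of countably many pairwise disjoint sets, each closed in X, such that each of them (with the subspace topology) is homeomorphic to a one-point space, or to the Cantor space, or to the space of irrational numbers. -/

import Mathlib

open Set Topology TopologicalSpace Filter

namespace FsigmaPartitionAux

abbrev 𝒦 : Type := ℕ → Bool

lemma isClopen_coord (m : ℕ) (b : Bool) : IsClopen {z : 𝒦 | z m = b} := by
  have : {z : 𝒦 | z m = b} = (fun z : 𝒦 => z m) ⁻¹' {b} := rfl
  rw [this]
  exact (isClopen_discrete {b}).preimage (continuous_apply m)

/-- least coordinate where `S` is not constant (junk value if constant) -/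
noncomputable def idx (S : Set 𝒦) : ℕ := sInf {m | ∃ z ∈ S, ∃ w ∈ S, z m ≠ w m}

/-- The splitting scheme along a branch `σ`. -/
noncomputable def D (C : Set 𝒦) (σ : ℕ → Bool) : ℕ → Set 𝒦
  | 0 => C
  | n + 1 => D C σ n ∩ {z | z (idx (D C σ n)) = σ n}

variable {C : Set 𝒦} {σ τ : ℕ → Bool}

lemma D_succ (n : ℕ) : D C σ (n + 1) = D C σ n ∩ {z | z (idx (D C σ n)) = σ n} := rfl

lemma D_subset (n : ℕ) : D C σ (n + 1) ⊆ D C σ n := inter_subset_left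

lemma D_eq_of_agree : ∀ n, (∀ i < n, σ i = τ i) → D C σ n = D C τ n := by
  intro n
  induction n with
  | zero => intro _; rfl
  | succ n ih =>
    intro h
    have h1 : D C σ n = D C τ n := ih fun i hi => h i (hi.trans (Nat.lt_succ_self n))
    rw [D_succ, D_succ, h1, h n (Nat.lt_succ_self n)]

lemma isClosed_D (hC : IsClosed C) : ∀ n, IsClosed (D C σ n) := by
  intro n
  induction n with
  | zero => exact hC
  | succ n ih => exact ih.inter (isClopen_coord _ _).isClosed

lemma exists_two_of_open_inter (hC : Perfect C) {V : Set 𝒦} (hV : IsOpen V)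
    (hne : (C ∩ V).Nonempty) : ∃ z ∈ C ∩ V, ∃ w ∈ C ∩ V, z ≠ w := by
  obtain ⟨x, hxC, hxV⟩ := hne
  have hacc : AccPt x (𝓟 (V ∩ C)) := (hC.acc x hxC).nhds_inter (hV.mem_nhds hxV)
  rw [accPt_iff_nhds] at hacc
  obtain ⟨y, hy, hyx⟩ := hacc univ univ_mem
  exact ⟨y, ⟨hy.2.2, hy.2.1⟩, x, ⟨hxC, hxV⟩, hyx⟩

lemma bool_eq_or {x y b : Bool} (h : x ≠ y) : b = x ∨ b = y := by
  cases x <;> cases y <;> cases b <;> simp_all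

lemma D_struct (hC : Perfect C) (hne : C.Nonempty) :
    ∀ n, ∃ V, IsOpen V ∧ D C σ n = C ∩ V ∧ (D C σ n).Nonempty := by
  intro n
  induction n with
  | zero => exact ⟨univ, isOpen_univ, (inter_univ C).symm, hne⟩
  | succ n ih =>
    obtain ⟨V, hV, hDV, hDne⟩ := ih
    have hDne' : (C ∩ V).Nonempty := hDV ▸ hDne
    obtain ⟨z, hz, w, hw, hzw⟩ := exists_two_of_open_inter hC hV hDne'
    rw [← hDV] at hz hw
    have hMne : {m | ∃ z ∈ D C σ n, ∃ w ∈ D C σ n, z m ≠ w m}.Nonempty := by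
      have : ∃ m, z m ≠ w m := by
        by_contra hcon
        push_neg at hcon
        exact hzw (funext hcon)
      obtain ⟨m, hm⟩ := this
      exact ⟨m, z, hz, w, hw, hm⟩
    obtain ⟨a, ha, b, hb, hab⟩ := Nat.sInf_mem hMne
    have hchild : (D C σ (n + 1)).Nonempty := by
      rw [D_succ]
      rcases bool_eq_or (b := σ n) hab with h | h
      · exact ⟨a, ha, h.symm⟩
      · exact ⟨b, hb, h.symm⟩
    refine ⟨V ∩ {z | z (idx (D C σ n)) = σ n}, hV.inter (isClopen_coord _ _).isOpen, ?_, hchild⟩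
    rw [D_succ, hDV, inter_assoc]

lemma D_agree (hC : Perfect C) (hne : C.Nonempty) :
    ∀ n, ∀ x ∈ D C σ n, ∀ y ∈ D C σ n, ∀ i < n, x i = y i := by
  intro n
  induction n with
  | zero => intro x _ y _ i hi; exact absurd hi (Nat.not_lt_zero i)
  | succ n ih =>
    intro x hx y hy i hi
    rw [D_succ] at hx hy
    have hx' : x ∈ D C σ n := hx.1
    have hy' : y ∈ D C σ n := hy.1
    rcases Nat.lt_succ_iff_lt_or_eq.1 hi with hi' | hi'
    · exact ih x hx' y hy' i hi'
    · rw [hi']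
      obtain ⟨V, hV, hDV, hDne⟩ := D_struct (σ := σ) hC hne n
      have hDne' : (C ∩ V).Nonempty := hDV ▸ hDne
      obtain ⟨z, hz, w, hw, hzw⟩ := exists_two_of_open_inter hC hV hDne'
      rw [← hDV] at hz hw
      obtain ⟨m', hm'⟩ : ∃ m', z m' ≠ w m' := by
        by_contra hcon; push_neg at hcon; exact hzw (funext hcon)
      have hMne : {m | ∃ z ∈ D C σ n, ∃ w ∈ D C σ n, z m ≠ w m}.Nonempty :=
        ⟨m', z, hz, w, hw, hm'⟩
      obtain ⟨a, ha, b, hb, hab⟩ := Nat.sInf_mem hMne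
      have hidx : idx (D C σ n) = sInf {m | ∃ z ∈ D C σ n, ∃ w ∈ D C σ n, z m ≠ w m} := rfl
      have hnm : n ≤ sInf {m | ∃ z ∈ D C σ n, ∃ w ∈ D C σ n, z m ≠ w m} := by
        by_contra hcon
        push_neg at hcon
        rw [← hidx] at hcon
        exact hab (ih a ha b hb _ (hidx ▸ hcon))
      rcases eq_or_lt_of_le hnm with heq | hlt
      · have h1 : x (idx (D C σ n)) = σ n := hx.2
        have h2 : y (idx (D C σ n)) = σ n := hy.2
        rw [hidx, ← heq] at h1 h2
        rw [h1, h2]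
      · have hnotin : n ∉ {m | ∃ z ∈ D C σ n, ∃ w ∈ D C σ n, z m ≠ w m} :=
          Nat.notMem_of_lt_sInf hlt
        by_contra hcon
        exact hnotin ⟨x, hx', y, hy', hcon⟩

/-- Brouwer's theorem inside the Cantor space: a nonempty perfect subset of
`ℕ → Bool` is homeomorphic to `ℕ → Bool`. -/
lemma perfect_homeo_cantor (hC : Perfect C) (hne : C.Nonempty) :
    Nonempty (↥C ≃ₜ 𝒦) := by
  classical
  have hinter : ∀ σ : ℕ → Bool, (⋂ n, D C σ n).Nonempty := by
    intro σ
    refine IsCompact.nonempty_iInter_of_sequence_nonempty_isCompact_isClosed _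
      (fun n => D_subset n) (fun n => (D_struct hC hne n).choose_spec.2.2) ?_
      (fun n => isClosed_D hC.closed n)
    exact (isClosed_D hC.closed 0).isCompact
  choose g hg using hinter
  have hgD : ∀ σ n, g σ ∈ D C σ n := fun σ n => mem_iInter.1 (hg σ) n
  have hinj : Function.Injective fun σ => (⟨g σ, hgD σ 0⟩ : ↥C) := by
    intro σ τ h
    have hgeq : g σ = g τ := congrArg Subtype.val h
    by_contra hne'
    have hex : ∃ n, σ n ≠ τ n := by
      by_contra hcon
      push_neg at hcon
      exact hne' (funext hcon)
    let n := Nat.find hex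
    have hag : ∀ i < n, σ i = τ i := fun i hi => not_ne_iff.1 (Nat.find_min hex hi)
    have hDeq : D C σ n = D C τ n := D_eq_of_agree n hag
    have h1 : g σ ∈ D C σ n ∩ {z | z (idx (D C σ n)) = σ n} := by
      rw [← D_succ]; exact hgD σ (n + 1)
    have h2 : g τ ∈ D C τ n ∩ {z | z (idx (D C τ n)) = τ n} := by
      rw [← D_succ]; exact hgD τ (n + 1)
    have h1' : g σ (idx (D C σ n)) = σ n := h1.2
    have h2' : g τ (idx (D C τ n)) = τ n := h2.2
    rw [← hDeq, ← hgeq] at h2'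
    exact Nat.find_spec hex (by rw [← h1', ← h2'])
  have hsurj : Function.Surjective fun σ => (⟨g σ, hgD σ 0⟩ : ↥C) := by
    rintro ⟨x, hx⟩
    let f : ℕ → Set 𝒦 := fun n => Nat.rec C (fun _ S => S ∩ {z | z (idx S) = x (idx S)}) n
    let σ : ℕ → Bool := fun n => x (idx (f n))
    have hfD : ∀ n, D C σ n = f n := by
      intro n
      induction n with
      | zero => rfl
      | succ n ih => rw [D_succ, ih]
    have hxf : ∀ n, x ∈ f n := by
      intro n
      induction n with
      | zero => exact hx
      | succ n ih => exact ⟨ih, rfl⟩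
    have : g σ = x := by
      funext i
      have h1 : g σ ∈ D C σ (i + 1) := hgD σ (i + 1)
      have h2 : x ∈ D C σ (i + 1) := by rw [hfD]; exact hxf (i + 1)
      exact D_agree hC hne (i + 1) _ h1 _ h2 i (Nat.lt_succ_self i)
    exact ⟨σ, Subtype.ext this⟩
  have hcont : Continuous fun σ => (⟨g σ, hgD σ 0⟩ : ↥C) := by
    refine Continuous.subtype_mk ?_ _
    refine continuous_pi fun i => ?_
    refine IsLocallyConstant.continuous ?_
    rw [IsLocallyConstant.iff_exists_open]
    intro σ
    refine ⟨⋂ j ∈ Finset.range (i + 1), {τ : 𝒦 | τ j = σ j}, ?_, ?_, ?_⟩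
    · exact isOpen_biInter_finset fun j _ => (isClopen_coord j (σ j)).isOpen
    · simp
    · intro τ hτ
      simp only [mem_iInter, Finset.mem_range, mem_setOf_eq] at hτ
      have hDeq : D C τ (i + 1) = D C σ (i + 1) := D_eq_of_agree (i + 1) fun j hj => hτ j hj
      have h1 : g τ ∈ D C σ (i + 1) := hDeq ▸ hgD τ (i + 1)
      exact D_agree hC hne (i + 1) _ h1 _ (hgD σ (i + 1)) i (Nat.lt_succ_self i)
  let e : (ℕ → Bool) ≃ ↥C := Equiv.ofBijective _ ⟨hinj, hsurj⟩
  exact ⟨(Continuous.homeoOfEquivCompactToT2 (f := e) hcont).symm⟩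

lemma singleton_homeo_unit (x : 𝒦) : Nonempty (↥({x} : Set 𝒦) ≃ₜ Unit) := by
  refine ⟨Homeomorph.mk ⟨fun _ => (), fun _ => ⟨x, rfl⟩, ?_, fun _ => rfl⟩
    continuous_const continuous_const⟩
  intro a
  exact Subtype.ext a.2.symm

lemma exists_clopen_basis {U : Set 𝒦} (hU : IsOpen U) {x : 𝒦} (hx : x ∈ U) :
    ∃ V, IsClopen V ∧ x ∈ V ∧ V ⊆ U := by
  obtain ⟨s, ⟨y, n, rfl⟩, hxs, hsU⟩ :=
    (PiNat.isTopologicalBasis_cylinders (fun _ : ℕ => Bool)).exists_subset_of_mem_open hx hU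
  refine ⟨PiNat.cylinder y n, ?_, hxs, hsU⟩
  have : PiNat.cylinder y n = ⋂ j ∈ Finset.range n, {z : 𝒦 | z j = y j} := by
    ext z
    simp [PiNat.mem_cylinder_iff]
  rw [this]
  exact isClopen_biInter_finset fun j _ => isClopen_coord j (y j)

/-- Every open subset of the Cantor space is a countable disjoint union of clopen sets. -/
lemma open_decomp (U : Set 𝒦) (hU : IsOpen U) :
    ∃ W : ℕ → Set 𝒦, (∀ k, IsClopen (W k)) ∧ Pairwise (Function.onFun Disjoint W) ∧ (⋃ k, W k) = U := by
  have hBU : ⋃₀ {V : Set 𝒦 | IsClopen V ∧ V ⊆ U} = U := by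
    apply subset_antisymm (sUnion_subset fun V hV => hV.2)
    intro x hx
    obtain ⟨V, h1, h2, h3⟩ := exists_clopen_basis hU hx
    exact ⟨V, ⟨h1, h3⟩, h2⟩
  obtain ⟨T, hTc, hTsub, hTU⟩ :=
    isOpen_sUnion_countable {V : Set 𝒦 | IsClopen V ∧ V ⊆ U} (fun V hV => hV.1.isOpen)
  rw [hBU] at hTU
  rcases T.eq_empty_or_nonempty with rfl | hTne
  · refine ⟨fun _ => ∅, fun _ => isClopen_empty, fun i j _ => disjoint_bot_left, ?_⟩
    simp [← hTU]
  · obtain ⟨f, rfl⟩ := hTc.exists_eq_range hTne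
    have hf : ∀ k, IsClopen (f k) := fun k => (hTsub (mem_range_self k)).1
    have hps : ∀ k, IsClopen ((partialSups f) k) := by
      intro k
      induction k with
      | zero => simpa using hf 0
      | succ k ih => rw [partialSups_add_one]; exact ih.union (hf _)
    refine ⟨disjointed f, ?_, disjoint_disjointed f, ?_⟩
    · intro k
      cases k with
      | zero => simpa [disjointed_zero] using hf 0
      | succ k =>
        rw [disjointed_add_one]
        exact (hf _).diff (hps k)
    · rw [iUnion_disjointed, ← sUnion_range, hTU]

end FsigmaPartitionAux

open FsigmaPartitionAux Set

/-- Every Fσ subset `X` of the Cantor space `ℕ → Bool` is the union of a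
countable pairwise disjoint family of sets, each closed in `X`, such that each
of them (with the subspace topology) is homeomorphic to a one-point space, to
the Cantor space, or to the space of irrational numbers. -/
theorem fsigma_partition_into_canonical_pieces (X : Set (ℕ → Bool))
    (hX : ∃ F : ℕ → Set (ℕ → Bool), (∀ n, IsClosed (F n)) ∧ X = ⋃ n, F n) :
    ∃ S : Set (Set (ℕ → Bool)),
      S.Countable ∧
      (∀ A ∈ S, A ⊆ X) ∧
      S.Pairwise Disjoint ∧
      ⋃₀ S = X ∧
      (∀ A ∈ S, IsClosed (Subtype.val ⁻¹' A : Set ↥X)) ∧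
      (∀ A ∈ S,
        Nonempty (↥A ≃ₜ Unit) ∨
        Nonempty (↥A ≃ₜ (ℕ → Bool)) ∨
        Nonempty (↥A ≃ₜ {x : ℝ // Irrational x})) := by
  classical
  obtain ⟨F, hFcl, rfl⟩ := hX
  -- the open sets for the disjointification of the F n
  set U : ℕ → Set 𝒦 := fun n => (⋃ m ∈ Finset.range n, F m)ᶜ with hUdef
  have hUopen : ∀ n, IsOpen (U n) := by
    intro n
    exact (isClosed_biUnion_finset fun m _ => hFcl m).isOpen_compl
  choose W hWclopen hWdisj hWU using fun n => open_decomp (U n) (hUopen n)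
  -- the closed pieces
  set K : ℕ → ℕ → Set 𝒦 := fun n k => F n ∩ W n k with hKdef
  have hKclosed : ∀ n k, IsClosed (K n k) := fun n k => (hFcl n).inter (hWclopen n k).isClosed
  have hKX : ∀ n k, K n k ⊆ ⋃ m, F m := fun n k x hx => mem_iUnion.2 ⟨n, hx.1⟩
  have hKU : ∀ n k, K n k ⊆ U n := by
    intro n k x hx
    have : W n k ⊆ U n := by rw [← hWU n]; exact subset_iUnion _ k
    exact this hx.2
  have hKdisj : ∀ n k n' k', (n, k) ≠ (n', k') → Disjoint (K n k) (K n' k') := by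
    have key : ∀ n n' k k', n < n' → Disjoint (K n k) (K n' k') := by
      intro n n' k k' hnn'
      rw [Set.disjoint_left]
      intro x hx hx'
      have hxU : x ∈ U n' := hKU n' k' hx'
      rw [hUdef] at hxU
      exact hxU (mem_biUnion (Finset.mem_range.2 hnn') hx.1)
    intro n k n' k' hne
    rcases lt_trichotomy n n' with h | rfl | h
    · exact key n n' k k' h
    · have hkk' : k ≠ k' := fun h => hne (by rw [h])
      have := hWdisj n hkk'
      exact this.mono inter_subset_right inter_subset_right
    · exact (key n' n k' k h).symm
  have hKcover : (⋃ n, ⋃ k, K n k) = ⋃ m, F m := by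
    apply subset_antisymm
    · exact iUnion_subset fun n => iUnion_subset fun k => hKX n k
    · intro x hx
      have hex : ∃ n, x ∈ F n := mem_iUnion.1 hx
      set n₀ := Nat.find hex with hn₀
      have hxF : x ∈ F n₀ := Nat.find_spec hex
      have hxU : x ∈ U n₀ := by
        rw [hUdef]
        intro hcon
        obtain ⟨m, hm, hxm⟩ := mem_iUnion₂.1 hcon
        exact Nat.find_min hex (Finset.mem_range.1 hm) hxm
      rw [← hWU n₀] at hxU
      obtain ⟨k, hk⟩ := mem_iUnion.1 hxU
      exact mem_iUnion.2 ⟨n₀, mem_iUnion.2 ⟨k, hxF, hk⟩⟩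
  -- Cantor–Bendixson on each piece
  have hCB : ∀ p : ℕ × ℕ, ∃ Dp : Set 𝒦, Perfect Dp ∧ Dp ⊆ K p.1 p.2 ∧
      (K p.1 p.2 \ Dp).Countable := by
    intro p
    obtain ⟨V, Dp, hVc, hDp, hVD⟩ :=
      exists_countable_union_perfect_of_isClosed (hKclosed p.1 p.2)
    refine ⟨Dp, hDp, ?_, ?_⟩
    · rw [hVD]; exact subset_union_right
    · refine hVc.mono ?_
      intro x hx
      have : x ∈ V ∪ Dp := hVD ▸ hx.1
      exact this.resolve_right hx.2
  choose P hPperf hPsub hPcnt using hCB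
  set Q : Set 𝒦 := ⋃ p : ℕ × ℕ, P p with hQdef
  set S : Set (Set 𝒦) :=
    {A | ∃ p : ℕ × ℕ, (P p).Nonempty ∧ A = P p} ∪
      (fun x => ({x} : Set 𝒦)) '' ((⋃ m, F m) \ Q) with hSdef
  have hsubX : ∀ A ∈ S, A ⊆ ⋃ m, F m := by
    rintro A (⟨p, _, rfl⟩ | ⟨x, hx, rfl⟩)
    · exact (hPsub p).trans (hKX p.1 p.2)
    · exact singleton_subset_iff.2 hx.1
  refine ⟨S, ?_, hsubX, ?_, ?_, ?_, ?_⟩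
  · -- countable
    apply Set.Countable.union
    · refine (countable_range P).mono ?_
      rintro A ⟨p, -, rfl⟩
      exact mem_range_self p
    · refine Set.Countable.image ?_ _
      have hsub : (⋃ m, F m) \ Q ⊆ ⋃ p : ℕ × ℕ, (K p.1 p.2 \ P p) := by
        intro x hx
        obtain ⟨n, hn⟩ := mem_iUnion.1 (hKcover ▸ hx.1)
        obtain ⟨k, hk⟩ := mem_iUnion.1 hn
        refine mem_iUnion.2 ⟨(n, k), hk, fun hc => hx.2 (mem_iUnion.2 ⟨(n, k), hc⟩)⟩
      exact (Set.countable_iUnion hPcnt).mono hsub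
  · -- pairwise disjoint
    rintro A (⟨p, hpne, rfl⟩ | ⟨x, hx, rfl⟩) B (⟨q, hqne, rfl⟩ | ⟨y, hy, rfl⟩) hAB
    · rcases eq_or_ne p q with rfl | hpq
      · exact absurd rfl hAB
      · exact ((hKdisj p.1 p.2 q.1 q.2 (by simpa using hpq)).mono (hPsub p) (hPsub q))
    · exact Set.disjoint_singleton_right.2 fun hc => hy.2 (mem_iUnion.2 ⟨p, hc⟩)
    · exact Set.disjoint_singleton_left.2 fun hc => hx.2 (mem_iUnion.2 ⟨q, hc⟩)
    · exact Set.disjoint_singleton_right.2 fun hc =>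
        hAB (by rw [mem_singleton_iff.1 hc])
  · -- union
    apply subset_antisymm
    · exact sUnion_subset hsubX
    · intro x hx
      by_cases hxQ : x ∈ Q
      · obtain ⟨p, hp⟩ := mem_iUnion.1 hxQ
        exact ⟨P p, Or.inl ⟨p, ⟨x, hp⟩, rfl⟩, hp⟩
      · exact ⟨{x}, Or.inr ⟨x, ⟨hx, hxQ⟩, rfl⟩, rfl⟩
  · -- closed in X
    rintro A (⟨p, _, rfl⟩ | ⟨x, _, rfl⟩)
    · exact (hPperf p).closed.preimage continuous_subtype_val
    · exact isClosed_singleton.preimage continuous_subtype_val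
  · -- homeomorphism types
    rintro A (⟨p, hpne, rfl⟩ | ⟨x, _, rfl⟩)
    · exact Or.inr (Or.inl (perfect_homeo_cantor (hPperf p) hpne))
    · exact Or.inl (singleton_homeo_unit x)
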